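/- Let X be a compact Hausdorff space and let φ₁, φ₂ : C(X, ℝ) → ℝ be nonzero continuous linear functionals such that for all f, g ∈ C(X, ℝ), f·g = 0 implies φ₁(f)·φ₂(g) = 0. Then there exists a point x ∈ X such that φ₁ = φ₁(1)·δₓ and φ₂ = φ₂(1)·δₓ, where δₓ(f) = f(x). -/
import Mathlib

open Set

lemma tsupport_cm_mul_right {X : Type*} [TopologicalSpace X] (f g : C(X, ℝ)) :
    tsupport ⇑(f * g) ⊆ tsupport ⇑g := by
  rw [ContinuousMap.coe_mul]
  exact closure_mono (Function.support_mul_subset_right _ _)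

lemma finite_partition_aux {X : Type*} [TopologicalSpace X] [T2Space X]
    [LocallyCompactSpace X] {n : ℕ} {t : Set X} {s : Fin n → Set X}
    (hs : ∀ i, IsOpen (s i)) (htcp : IsCompact t) (hst : t ⊆ ⋃ i, s i) :
    ∃ f : Fin n → C(X, ℝ), (∀ i, tsupport (f i) ⊆ s i) ∧
      (∀ x ∈ t, ∑ i, (f i) x = 1) ∧ (∀ i x, 0 ≤ (f i) x) ∧
      (∀ x, ∑ i, (f i) x ≤ 1) := by
  obtain ⟨f, hsub, -⟩ := PartitionOfUnity.exists_isSubordinate_of_locallyFinite_t2space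
    htcp s hs (locallyFinite_of_finite _) hst
  refine ⟨fun i => f i, hsub, ?_, fun i x => f.nonneg i x, ?_⟩
  · intro x hx
    have h := f.sum_eq_one hx
    rwa [finsum_eq_sum_of_fintype] at h
  · intro x
    have h := f.sum_le_one x
    rwa [finsum_eq_sum_of_fintype] at h

theorem jointly_separating_functionals_eval
    {X : Type*} [TopologicalSpace X] [CompactSpace X] [T2Space X]
    (φ₁ φ₂ : C(X, ℝ) →L[ℝ] ℝ) (h₁ : φ₁ ≠ 0) (h₂ : φ₂ ≠ 0)
    (hsep : ∀ f g : C(X, ℝ), f * g = 0 → φ₁ f * φ₂ g = 0) :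
    ∃ x : X, (∀ f : C(X, ℝ), φ₁ f = φ₁ 1 * f x) ∧
      (∀ f : C(X, ℝ), φ₂ f = φ₂ 1 * f x) := by
  -- `S φ y` : `y` is in the support of `φ`
  set S : (C(X, ℝ) →L[ℝ] ℝ) → X → Prop :=
    fun φ y => ∀ U : Set X, IsOpen U → y ∈ U → ∃ f : C(X, ℝ), tsupport f ⊆ U ∧ φ f ≠ 0 with hS
  -- nonemptiness of the support
  have nonempty : ∀ φ : (C(X, ℝ) →L[ℝ] ℝ), φ ≠ 0 → ∃ y, S φ y := by
    intro φ hφ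
    by_contra hc
    push_neg at hc
    simp only [hS, not_forall, not_exists, not_and, not_not] at hc
    choose U hUopen hUmem hUz using hc
    obtain ⟨t, ht⟩ := isCompact_univ.elim_finite_subcover U hUopen
      (fun y _ => mem_iUnion.2 ⟨y, hUmem y⟩)
    set n := t.card
    set e := t.equivFin
    set s : Fin n → Set X := fun i => U ((e.symm i : X)) with hs
    have hcov : (univ : Set X) ⊆ ⋃ i, s i := by
      intro x hx
      obtain ⟨y, hyt, hyU⟩ := by simpa using ht hx
      exact mem_iUnion.2 ⟨e ⟨y, hyt⟩, by simpa [hs] using hyU⟩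
    obtain ⟨u, husub, hsum1, -, -⟩ := finite_partition_aux
      (fun i => hUopen _) isCompact_univ hcov
    apply hφ
    ext g
    have hgsum : g = ∑ i, g * u i := by
      ext x
      simp only [ContinuousMap.sum_apply, ContinuousMap.mul_apply, ← Finset.mul_sum]
      rw [hsum1 x (mem_univ x), mul_one]
    have : φ g = ∑ i, φ (g * u i) := by rw [hgsum, map_sum]; rw [← hgsum]
    rw [this]
    exact Finset.sum_eq_zero fun i _ =>
      hUz _ _ ((tsupport_cm_mul_right g (u i)).trans (husub i))
  -- cross lemma: support points of φ₁ and φ₂ coincide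
  have cross : ∀ x₁ x₂, S φ₁ x₁ → S φ₂ x₂ → x₁ = x₂ := by
    intro x₁ x₂ hx₁ hx₂
    by_contra hne
    obtain ⟨U₁, U₂, hU₁, hU₂, hm₁, hm₂, hdisj⟩ := t2_separation hne
    obtain ⟨f, hfsub, hf⟩ := hx₁ U₁ hU₁ hm₁
    obtain ⟨g, hgsub, hg⟩ := hx₂ U₂ hU₂ hm₂
    have hfg : f * g = 0 := by
      ext x
      by_cases hx : x ∈ tsupport f
      · have hxg : g x = 0 := by
          apply image_eq_zero_of_notMem_tsupport
          intro hxg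
          exact (hdisj.le_bot ⟨hfsub hx, hgsub hxg⟩)
        simp [hxg]
      · simp [image_eq_zero_of_notMem_tsupport hx]
    have := hsep f g hfg
    rcases mul_eq_zero.1 this with h | h
    · exact hf h
    · exact hg h
  obtain ⟨x, hx⟩ := nonempty φ₁ h₁
  obtain ⟨x', hx'⟩ := nonempty φ₂ h₂
  obtain rfl : x = x' := cross x x' hx hx'
  -- vanishing lemma
  have vanish : ∀ φ : (C(X, ℝ) →L[ℝ] ℝ),
      (∀ y, y ≠ x → ∃ U : Set X, IsOpen U ∧ y ∈ U ∧ ∀ f : C(X, ℝ), tsupport f ⊆ U → φ f = 0) →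
      ∀ g : C(X, ℝ), g x = 0 → φ g = 0 := by
    intro φ hφ g hgx
    have key : ∀ ε : ℝ, 0 < ε → |φ g| ≤ ‖φ‖ * ε := by
      intro ε hε
      set K : Set X := {y | ε ≤ |g y|} with hK
      have hKclosed : IsClosed K :=
        isClosed_le continuous_const (map_continuous g).abs
      have hKcp : IsCompact K := hKclosed.isCompact
      have hxK : x ∉ K := by
        simp only [hK, mem_setOf_eq, hgx, abs_zero, not_le]
        exact hε
      have hφ' : ∀ y : {y : X // y ≠ x}, ∃ U : Set X, IsOpen U ∧ (y : X) ∈ U ∧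
          ∀ f : C(X, ℝ), tsupport ⇑f ⊆ U → φ f = 0 := fun y => hφ y y.2
      choose V hVopen hVmem hVz using hφ'
      have hKcov : K ⊆ ⋃ y : {y : X // y ≠ x}, V y := by
        intro z hz
        have hzx : z ≠ x := fun h => hxK (h ▸ hz)
        exact mem_iUnion.2 ⟨⟨z, hzx⟩, hVmem ⟨z, hzx⟩⟩
      obtain ⟨t, ht⟩ := hKcp.elim_finite_subcover _ (fun y => hVopen _) hKcov
      set n := t.card
      set e := t.equivFin
      set s : Fin n → Set X := fun i => V (e.symm i) with hs
      have hcov : K ⊆ ⋃ i, s i := by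
        intro z hz
        obtain ⟨y, hyt, hyV⟩ := mem_iUnion₂.1 (ht hz)
        exact mem_iUnion.2 ⟨e ⟨y, hyt⟩, by simpa [hs] using hyV⟩
      obtain ⟨u, husub, hsum1, hnn, hle1⟩ := finite_partition_aux
        (fun i => hVopen _) hKcp hcov
      set w : C(X, ℝ) := ∑ i, u i with hw
      have hzero : φ (g * w) = 0 := by
        rw [hw, Finset.mul_sum, map_sum]
        exact Finset.sum_eq_zero fun i _ =>
          hVz (e.symm i) _ ((tsupport_cm_mul_right g (u i)).trans (husub i))
      have hsplit : φ g = φ (g * (1 - w)) := by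
        have : g * (1 - w) = g - g * w := by ring
        rw [this, map_sub, hzero, sub_zero]
      have hnorm : ‖g * (1 - w)‖ ≤ ε := by
        apply ContinuousMap.norm_le _ hε.le |>.2
        intro z
        simp only [ContinuousMap.mul_apply, ContinuousMap.sub_apply,
          ContinuousMap.one_apply, Real.norm_eq_abs]
        have hwz : (0:ℝ) ≤ w z ∧ w z ≤ 1 := by
          constructor
          · simp only [hw, ContinuousMap.sum_apply]
            exact Finset.sum_nonneg fun i _ => hnn i z
          · simpa [hw, ContinuousMap.sum_apply] using hle1 z
        by_cases hzK : z ∈ K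
        · have : (w z : ℝ) = 1 := by
            simpa [hw, ContinuousMap.sum_apply] using hsum1 z hzK
          simp [this, hε.le]
        · have hgz : |g z| < ε := by simpa [hK, not_le] using hzK
          have : |g z * (1 - w z)| = |g z| * |1 - w z| := abs_mul _ _
          rw [this]
          have h1 : |1 - w z| ≤ 1 := by rw [abs_le]; constructor <;> linarith [hwz.1, hwz.2]
          calc |g z| * |1 - w z| ≤ ε * 1 :=
                mul_le_mul hgz.le h1 (abs_nonneg _) hε.le
            _ = ε := mul_one ε
      calc |φ g| = |φ (g * (1 - w))| := by rw [hsplit]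
        _ ≤ ‖φ‖ * ‖g * (1 - w)‖ := by
            simpa [Real.norm_eq_abs] using φ.le_opNorm (g * (1 - w))
        _ ≤ ‖φ‖ * ε := mul_le_mul_of_nonneg_left hnorm (norm_nonneg φ)
    -- conclude φ g = 0
    have habs : |φ g| ≤ 0 := by
      refine le_of_forall_pos_le_add fun ε hε => ?_
      have h2 : 0 < ε / (‖φ‖ + 1) := by positivity
      have := key _ h2
      have h3 : ‖φ‖ * (ε / (‖φ‖ + 1)) ≤ ε := by
        rw [mul_div_assoc']
        rw [div_le_iff₀ (by positivity)]
        nlinarith [norm_nonneg φ, hε]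
      linarith
    have := abs_nonneg (φ g)
    have : |φ g| = 0 := le_antisymm habs this
    exact abs_eq_zero.1 this
  -- finish
  have hS₁ : ∀ y, y ≠ x → ∃ U : Set X, IsOpen U ∧ y ∈ U ∧
      ∀ f : C(X, ℝ), tsupport f ⊆ U → φ₁ f = 0 := by
    intro y hy
    by_contra hc
    push_neg at hc
    have hSy : S φ₁ y := by
      intro U hUo hUm
      obtain ⟨f, hfs, hf⟩ := hc U hUo hUm
      exact ⟨f, hfs, hf⟩
    exact hy (cross y x hSy hx')
  have hS₂ : ∀ y, y ≠ x → ∃ U : Set X, IsOpen U ∧ y ∈ U ∧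
      ∀ f : C(X, ℝ), tsupport f ⊆ U → φ₂ f = 0 := by
    intro y hy
    by_contra hc
    push_neg at hc
    have hSy : S φ₂ y := by
      intro U hUo hUm
      obtain ⟨f, hfs, hf⟩ := hc U hUo hUm
      exact ⟨f, hfs, hf⟩
    exact hy (cross x y hx hSy).symm
  have final : ∀ (φ : C(X, ℝ) →L[ℝ] ℝ),
      (∀ g : C(X, ℝ), g x = 0 → φ g = 0) → ∀ f : C(X, ℝ), φ f = φ 1 * f x := by
    intro φ hφ f
    have h0 : φ (f - f x • 1) = 0 := by
      apply hφ
      simp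
    rw [map_sub, map_smul] at h0
    have : φ f - f x * φ 1 = 0 := by simpa [smul_eq_mul] using h0
    linarith [this]
  exact ⟨x, final φ₁ (vanish φ₁ hS₁), final φ₂ (vanish φ₂ hS₂)⟩
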